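/- If S : (ℕ → Ordinal) → Ordinal is strictly monotone on e-special elements, then S is strictly monotone on the characteristic ε: for all sequences a, b : ℕ → Ordinal with a i ≤ b i for every i and ε_a < ε_b, one has S a < S b. -/
import Mathlib


/-- `ε_a`: the least ordinal `ε` such that `{i | ε ≤ a i}` is finite. -/
noncomputable def epsSeq (a : ℕ → Ordinal) : Ordinal :=
  sInf {ε : Ordinal | {i : ℕ | ε ≤ a i}.Finite}

/-- `S` is strictly monotone on e-special elements. -/
def StrictMonoOnESpecial (S : (ℕ → Ordinal) → Ordinal) : Prop :=
  ∀ a b : ℕ → Ordinal, (∀ i, a i ≤ b i) →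
    (∃ j : ℕ, epsSeq a ≤ b j ∧ a j < b j) → S a < S b

lemma epsSet_nonempty (a : ℕ → Ordinal) :
    {ε : Ordinal | {i : ℕ | ε ≤ a i}.Finite}.Nonempty := by
  refine ⟨(⨆ i, a i) + 1, ?_⟩
  have : {i : ℕ | (⨆ i, a i) + 1 ≤ a i} = ∅ := by
    ext i
    simp only [Set.mem_setOf_eq, Set.mem_empty_iff_false, iff_false, not_le]
    exact lt_of_le_of_lt (Ordinal.le_iSup a i) (lt_add_one _)
  show Set.Finite _; rw [this]; exact Set.finite_empty

/-- An operation strictly monotone on e-special elements is strictly monotone on the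
characteristic `ε`. -/
theorem strictMono_eps_of_strictMonoOnESpecial
    (S : (ℕ → Ordinal) → Ordinal) (hS : StrictMonoOnESpecial S) :
    ∀ a b : ℕ → Ordinal, (∀ i, a i ≤ b i) → epsSeq a < epsSeq b → S a < S b := by
  intro a b hab heps
  refine hS a b hab ?_
  have hfin : {i : ℕ | epsSeq a ≤ a i}.Finite :=
    csInf_mem (epsSet_nonempty a)
  have hinf : {i : ℕ | epsSeq a ≤ b i}.Infinite := by
    intro hf
    exact absurd (csInf_le' (s := {ε : Ordinal | {i : ℕ | ε ≤ b i}.Finite}) hf)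
      (not_le_of_gt heps)
  obtain ⟨j, hjb, hja⟩ := (hinf.diff hfin).nonempty
  exact ⟨j, hjb, lt_of_lt_of_le (not_le.mp hja) hjb⟩
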